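/- If M is an R-module with only finitely many small submodules (an fs-module), then Rad(M) has finite length; in particular Rad(M) is both Artinian and Noetherian. -/

import Mathlib

/-- A submodule `N` of `M` is small (superfluous): `N + A = M` implies `A = M`. -/
def IsSmallSubmodule {R M : Type*} [Ring R] [AddCommGroup M] [Module R M]
    (N : Submodule R M) : Prop :=
  ∀ A : Submodule R M, N ⊔ A = ⊤ → A = ⊤

/-- `M` is an fs-module: it has only finitely many small submodules. -/
def IsFsModule (R M : Type*) [Ring R] [AddCommGroup M] [Module R M] : Prop :=
  {N : Submodule R M | IsSmallSubmodule N}.Finite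

/-- The radical of `M`, as the sum of all small submodules of `M`. -/
def modRad (R M : Type*) [Ring R] [AddCommGroup M] [Module R M] : Submodule R M :=
  sSup {N : Submodule R M | IsSmallSubmodule N}

/-- The radical of `M`, as the intersection of all maximal submodules of `M`. -/
def modRad' (R M : Type*) [Ring R] [AddCommGroup M] [Module R M] : Submodule R M :=
  sInf {N : Submodule R M | IsCoatom N}

/-- The socle of `M`: the sum of all minimal (simple) submodules of `M`. -/
def modSoc (R M : Type*) [Ring R] [AddCommGroup M] [Module R M] : Submodule R M :=
  sSup {N : Submodule R M | IsAtom N}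

/-- `M` has finite hollow dimension: for every descending chain `N₁ ⊇ N₂ ⊇ ⋯`
there is `n` such that `Nₙ / N_k` is small in `M / N_k` for all `k ≥ n`. -/
def HasFiniteHollowDim (R M : Type*) [Ring R] [AddCommGroup M] [Module R M] : Prop :=
  ∀ N : ℕ → Submodule R M, (∀ i j, i ≤ j → N j ≤ N i) →
    ∃ n, ∀ k, n ≤ k → IsSmallSubmodule (Submodule.map (N k).mkQ (N n))

/-- `M` has finite Goldie dimension: it contains no infinite direct sum of
nonzero submodules. -/
def HasFiniteGoldieDim (R M : Type*) [Ring R] [AddCommGroup M] [Module R M] : Prop :=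
  ¬ ∃ f : ℕ → Submodule R M, (∀ i, f i ≠ ⊥) ∧ iSupIndep f


section Aux
variable {R M : Type*} [Ring R] [AddCommGroup M] [Module R M]

lemma isSmall_of_le {N K : Submodule R M} (hN : IsSmallSubmodule N) (h : K ≤ N) :
    IsSmallSubmodule K := by
  intro A hA
  exact hN A (top_unique (hA ▸ sup_le_sup_right h A))

lemma isSmall_bot : IsSmallSubmodule (⊥ : Submodule R M) := by
  intro A hA; simpa using hA

lemma isSmall_sup {N K : Submodule R M} (hN : IsSmallSubmodule N)
    (hK : IsSmallSubmodule K) : IsSmallSubmodule (N ⊔ K) := by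
  intro A hA
  exact hK A (hN (K ⊔ A) (by rw [← sup_assoc]; exact hA))

lemma isSmall_sSup {s : Set (Submodule R M)} (hs : s.Finite)
    (h : ∀ N ∈ s, IsSmallSubmodule N) : IsSmallSubmodule (sSup s) := by
  refine Set.Finite.induction_on (motive := fun s _ => (∀ N ∈ s, IsSmallSubmodule N) → IsSmallSubmodule (sSup s)) s hs (fun _ => by simpa using isSmall_bot) ?_ h
  intro a s _ _ ih h
  rw [sSup_insert]
  exact isSmall_sup (h _ (Set.mem_insert _ _))
    (ih fun N hN => h N (Set.mem_insert_of_mem _ hN))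

end Aux

theorem rad_finiteLength_of_fs (R M : Type*) [Ring R] [AddCommGroup M] [Module R M]
    (hfs : IsFsModule R M) :
    IsFiniteLength R (modRad R M) ∧ IsArtinian R (modRad R M) ∧
      IsNoetherian R (modRad R M) := by
  have hrad : IsSmallSubmodule (modRad R M) := isSmall_sSup hfs fun N hN => hN
  have hfin : {P : Submodule R M | P ≤ modRad R M}.Finite :=
    hfs.subset fun P hP => isSmall_of_le hrad hP
  haveI : Finite {P : Submodule R M // P ≤ modRad R M} := hfin.to_subtype
  haveI : Finite (Submodule R (modRad R M)) :=
    Finite.of_equiv _ (Submodule.MapSubtype.orderIso (modRad R M)).symm.toEquiv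
  have hn : IsNoetherian R (modRad R M) := isNoetherian_iff.mpr (Finite.wellFounded_of_trans_of_irrefl _)
  have ha : IsArtinian R (modRad R M) := ⟨Finite.wellFounded_of_trans_of_irrefl _⟩
  exact ⟨(isFiniteLength_iff_isNoetherian_isArtinian ..).mpr ⟨hn, ha⟩, ha, hn⟩
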